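/- arXiv:2408.07043 — 2 statements merged into one kernel-verified Lean document; each statement's English description precedes it below -/
import Mathlib

section
/- Let g : ℝ → ℝ be continuous, bounded, and integrable, and set u = G g. Then u is twice continuously differentiable on ℝ, its derivative is u′(x) = −(1/2)∫_ℝ sgn(x−y) e^{−|x−y|} g(y) dy, and u(x) − u″(x) = g(x) for every x ∈ ℝ; that is, G inverts the operator 1 − d²/dx². -/
open MeasureTheory Real

/-- Convolution with the Green's function of `1 - d²/dx²` on `ℝ`. -/
noncomputable def G (f : ℝ → ℝ) (x : ℝ) : ℝ :=
  (1 / 2) * ∫ y : ℝ, Real.exp (-|x - y|) * f y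

lemma hasDerivAt_integral_Iic (h : ℝ → ℝ) (hc : Continuous h)
    (hi : ∀ x : ℝ, IntegrableOn h (Set.Iic x)) (x : ℝ) :
    HasDerivAt (fun t => ∫ y in Set.Iic t, h y) (h x) x := by
  have key : (fun t => ∫ y in Set.Iic t, h y)
      = fun t => (∫ y in Set.Iic 0, h y) + ∫ y in (0:ℝ)..t, h y := by
    funext t
    rw [← intervalIntegral.integral_Iic_sub_Iic (hi 0) (hi t)]
    ring
  rw [key]
  exact (intervalIntegral.integral_hasDerivAt_right (hc.intervalIntegrable 0 x)
    hc.aestronglyMeasurable.stronglyMeasurableAtFilter hc.continuousAt).const_add _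

lemma hasDerivAt_integral_Ioi (h : ℝ → ℝ) (hc : Continuous h)
    (hi : ∀ x : ℝ, IntegrableOn h (Set.Ioi x)) (x : ℝ) :
    HasDerivAt (fun t => ∫ y in Set.Ioi t, h y) (-h x) x := by
  have key : (fun t => ∫ y in Set.Ioi t, h y)
      = (fun s => ∫ y in Set.Iic s, h (-y)) ∘ (fun t : ℝ => -t) := by
    funext t
    simp only [Function.comp_apply, integral_comp_neg_Iic, neg_neg]
  rw [key]
  have hi' : ∀ s : ℝ, IntegrableOn (fun y => h (-y)) (Set.Iic s) := by
    intro s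
    rw [integrableOn_Iic_iff_integrableOn_Iio]
    have A : MeasurableEmbedding (fun x : ℝ => -x) :=
      (Homeomorph.neg ℝ).isClosedEmbedding.measurableEmbedding
    have h1 : IntegrableOn h (Set.Ioi (-s)) (Measure.map (fun x : ℝ => -x) volume) := by
      rw [Measure.map_neg_eq_self]; exact hi (-s)
    have h2 := (MeasurableEmbedding.integrableOn_map_iff A).mp h1
    simpa [Function.comp_def] using h2
  have h1 := hasDerivAt_integral_Iic (fun y => h (-y)) (hc.comp continuous_neg) hi' (-x)
  have h2 := h1.comp x (hasDerivAt_neg x)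
  simpa using h2

lemma abs_real_sign (t : ℝ) : |Real.sign t| ≤ 1 := by
  rcases lt_trichotomy t 0 with h|h|h
  · simp [Real.sign_of_neg h]
  · simp [h, Real.sign_zero]
  · simp [Real.sign_of_pos h]

lemma measurable_real_sign : Measurable Real.sign := by
  have : Real.sign = fun r : ℝ => if r < 0 then (-1:ℝ) else if 0 < r then 1 else 0 :=
    funext fun r => rfl
  rw [this]
  exact Measurable.ite measurableSet_Iio measurable_const
    (Measurable.ite measurableSet_Ioi measurable_const measurable_const)

/-- If `g` is continuous, bounded and integrable, then `u = G g` is `C²`,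
`u′(x) = -(1/2) ∫ sgn(x-y) e^{-|x-y|} g(y) dy`, and `u - u″ = g`, i.e. `G` inverts
`1 - d²/dx²`. -/
theorem G_inverts_one_sub_dxx (g : ℝ → ℝ) (hg_cont : Continuous g)
    (hg_bdd : ∃ C : ℝ, ∀ x : ℝ, |g x| ≤ C) (hg_int : Integrable g) :
    ContDiff ℝ 2 (G g) ∧
    (∀ x : ℝ, deriv (G g) x
        = -(1 / 2) * ∫ y : ℝ, Real.sign (x - y) * Real.exp (-|x - y|) * g y) ∧
    (∀ x : ℝ, G g x - deriv (deriv (G g)) x = g x) := by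
  clear hg_bdd
  -- integrability of the pieces
  have hint1 : ∀ x : ℝ, IntegrableOn (fun y => Real.exp y * g y) (Set.Iic x) := by
    intro x
    refine Integrable.mono' ((hg_int.norm.const_mul (Real.exp x)).integrableOn (s := Set.Iic x))
      ((Real.continuous_exp.mul hg_cont).aestronglyMeasurable.restrict) ?_
    filter_upwards [ae_restrict_mem measurableSet_Iic] with y hy
    rw [Real.norm_eq_abs, abs_mul, abs_of_pos (Real.exp_pos y), Real.norm_eq_abs]
    exact mul_le_mul_of_nonneg_right (Real.exp_le_exp.2 hy) (abs_nonneg _)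
  have hint2 : ∀ x : ℝ, IntegrableOn (fun y => Real.exp (-y) * g y) (Set.Ioi x) := by
    intro x
    refine Integrable.mono' ((hg_int.norm.const_mul (Real.exp (-x))).integrableOn (s := Set.Ioi x))
      (((Real.continuous_exp.comp continuous_neg).mul hg_cont).aestronglyMeasurable.restrict) ?_
    filter_upwards [ae_restrict_mem measurableSet_Ioi] with y hy
    rw [Real.norm_eq_abs, abs_mul, abs_of_pos (Real.exp_pos (-y)), Real.norm_eq_abs]
    exact mul_le_mul_of_nonneg_right (Real.exp_le_exp.2 (by linarith [le_of_lt (Set.mem_Ioi.1 hy)])) (abs_nonneg _)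
  have hintG : ∀ x : ℝ, Integrable (fun y => Real.exp (-|x - y|) * g y) := by
    intro x
    refine hg_int.norm.mono' (((((continuous_const.sub continuous_id).abs).neg).rexp.mul
      hg_cont).aestronglyMeasurable) ?_
    filter_upwards with y
    rw [Real.norm_eq_abs, abs_mul, abs_of_pos (Real.exp_pos _), Real.norm_eq_abs]
    calc Real.exp (-|x - y|) * |g y| ≤ 1 * |g y| :=
          mul_le_mul_of_nonneg_right (Real.exp_le_one_iff.2 (neg_nonpos.2 (abs_nonneg _)))
            (abs_nonneg _)
      _ = |g y| := one_mul _
  set F₁ : ℝ → ℝ := fun t => ∫ y in Set.Iic t, Real.exp y * g y with hF₁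
  set F₂ : ℝ → ℝ := fun t => ∫ y in Set.Ioi t, Real.exp (-y) * g y with hF₂
  -- the representation of G g
  have hrepr : G g = fun x => (1/2) * (Real.exp (-x) * F₁ x + Real.exp x * F₂ x) := by
    funext x
    unfold G
    rw [← intervalIntegral.integral_Iic_add_Ioi ((hintG x).integrableOn) ((hintG x).integrableOn)]
    congr 1
    have e1 : (∫ y in Set.Iic x, Real.exp (-|x - y|) * g y)
        = ∫ y in Set.Iic x, Real.exp (-x) * (Real.exp y * g y) := by
      refine setIntegral_congr_fun measurableSet_Iic (fun y hy => ?_)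
      have : -|x - y| = -x + y := by
        rw [abs_of_nonneg (sub_nonneg.2 hy)]; ring
      rw [this, Real.exp_add]; ring
    have e2 : (∫ y in Set.Ioi x, Real.exp (-|x - y|) * g y)
        = ∫ y in Set.Ioi x, Real.exp x * (Real.exp (-y) * g y) := by
      refine setIntegral_congr_fun measurableSet_Ioi (fun y hy => ?_)
      have hyx : x ≤ y := le_of_lt hy
      have : -|x - y| = x + -y := by
        rw [abs_of_nonpos (sub_nonpos.2 hyx)]; ring
      rw [this, Real.exp_add]; ring
    rw [e1, e2, integral_const_mul, integral_const_mul]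
  -- derivatives of the pieces
  have hF₁' : ∀ x : ℝ, HasDerivAt F₁ (Real.exp x * g x) x := fun x =>
    hasDerivAt_integral_Iic _ (Real.continuous_exp.mul hg_cont) hint1 x
  have hF₂' : ∀ x : ℝ, HasDerivAt F₂ (-(Real.exp (-x) * g x)) x := fun x =>
    hasDerivAt_integral_Ioi _ ((Real.continuous_exp.comp continuous_neg).mul hg_cont) hint2 x
  have hexp_neg : ∀ x : ℝ, HasDerivAt (fun t : ℝ => Real.exp (-t)) (-Real.exp (-x)) x := by
    intro x
    simpa [Function.comp_def] using (Real.hasDerivAt_exp (-x)).comp x (hasDerivAt_neg x)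
  set v : ℝ → ℝ := fun x => (1/2) * (-Real.exp (-x) * F₁ x + Real.exp x * F₂ x) with hv
  -- derivative of G g
  have hu' : ∀ x : ℝ, HasDerivAt (G g) (v x) x := by
    intro x
    rw [hrepr]
    have h1 := (hexp_neg x).mul (hF₁' x)
    have h2 := (Real.hasDerivAt_exp x).mul (hF₂' x)
    have h3 := (h1.add h2).const_mul (1/2 : ℝ)
    refine h3.congr_deriv (Eq.symm ?_)
    have hxx : Real.exp (-x) * Real.exp x = 1 := by
      rw [← Real.exp_add]; simp
    simp only [hv]
    nlinarith [hxx]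
  -- second derivative
  have hv' : ∀ x : ℝ, HasDerivAt v (G g x - g x) x := by
    intro x
    have h1 := ((hexp_neg x).neg.mul (hF₁' x))
    have h2 := (Real.hasDerivAt_exp x).mul (hF₂' x)
    have h3 := (h1.add h2).const_mul (1/2 : ℝ)
    refine h3.congr_deriv (Eq.symm ?_)
    have hxx : Real.exp (-x) * Real.exp x = 1 := by
      rw [← Real.exp_add]; simp
    rw [hrepr]
    simp only [Pi.neg_apply]
    linear_combination (g x) * hxx
  have hderiv : deriv (G g) = v := funext fun x => (hu' x).deriv
  have hderiv2 : deriv v = fun x => G g x - g x := funext fun x => (hv' x).deriv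
  have hdiff_u : Differentiable ℝ (G g) := fun x => (hu' x).differentiableAt
  have hdiff_v : Differentiable ℝ v := fun x => (hv' x).differentiableAt
  refine ⟨?_, ?_, ?_⟩
  · rw [show (2 : WithTop ℕ∞) = 1 + 1 from rfl, contDiff_succ_iff_deriv]
    refine ⟨hdiff_u, by simp, ?_⟩
    rw [hderiv]
    refine contDiff_one_iff_deriv.2 ⟨hdiff_v, ?_⟩
    rw [hderiv2]
    exact hdiff_u.continuous.sub hg_cont
  · intro x
    -- integrability of the sign integrand
    have hsint : Integrable (fun y => Real.sign (x - y) * Real.exp (-|x - y|) * g y) := by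
      refine hg_int.norm.mono' ?_ ?_
      · exact (((measurable_real_sign.comp (measurable_const.sub measurable_id)).mul
          ((((continuous_const.sub continuous_id).abs).neg).rexp).measurable).mul
          hg_cont.measurable).aestronglyMeasurable
      · filter_upwards with y
        rw [Real.norm_eq_abs, abs_mul, abs_mul, Real.norm_eq_abs]
        have h1 : |Real.sign (x - y)| ≤ 1 := abs_real_sign _
        have h2 : |Real.exp (-|x - y|)| ≤ 1 := by
          rw [abs_of_pos (Real.exp_pos _)]
          exact Real.exp_le_one_iff.2 (neg_nonpos.2 (abs_nonneg _))
        calc |Real.sign (x - y)| * |Real.exp (-|x - y|)| * |g y| ≤ 1 * 1 * |g y| :=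
              mul_le_mul_of_nonneg_right
                (mul_le_mul h1 h2 (abs_nonneg _) zero_le_one) (abs_nonneg _)
          _ = |g y| := by ring
    have hsplit : (∫ y : ℝ, Real.sign (x - y) * Real.exp (-|x - y|) * g y)
        = Real.exp (-x) * F₁ x - Real.exp x * F₂ x := by
      rw [← intervalIntegral.integral_Iio_add_Ici (hsint.integrableOn) (hsint.integrableOn)]
      have e1 : (∫ y in Set.Iio x, Real.sign (x - y) * Real.exp (-|x - y|) * g y)
          = ∫ y in Set.Iio x, Real.exp (-x) * (Real.exp y * g y) := by
        refine setIntegral_congr_fun measurableSet_Iio (fun y hy => ?_)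
        have hylt : y < x := hy
        rw [Real.sign_of_pos (sub_pos.2 hylt)]
        have : -|x - y| = -x + y := by
          rw [abs_of_nonneg (sub_nonneg.2 hylt.le)]; ring
        rw [this, Real.exp_add]; ring
      have e2 : (∫ y in Set.Ici x, Real.sign (x - y) * Real.exp (-|x - y|) * g y)
          = ∫ y in Set.Ioi x, -(Real.exp x * (Real.exp (-y) * g y)) := by
        rw [MeasureTheory.integral_Ici_eq_integral_Ioi]
        refine setIntegral_congr_fun measurableSet_Ioi (fun y hy => ?_)
        have hylt : x < y := hy
        rw [Real.sign_of_neg (sub_neg.2 hylt)]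
        have : -|x - y| = x + -y := by
          rw [abs_of_nonpos (sub_nonpos.2 hylt.le)]; ring
        rw [this, Real.exp_add]; ring
      rw [e1, e2, integral_const_mul, integral_neg, integral_const_mul,
        ← MeasureTheory.integral_Iic_eq_integral_Iio]
      ring
    rw [hderiv, hsplit, hv]
    ring
  · intro x
    rw [hderiv, hderiv2]
    ring
end

section
/- Let q > 1 and 0 < c ≤ 2/(2+q). Define λ_c(t) = t^c/log t, μ_c(t) = t^{1−c} (log t)², and let φ : ℝ → ℝ be given by φ(x) = e^x − 1 for x ≤ 0 and φ(x) = 1 − e^{−x} for x > 0 (so that φ′(x) = e^{−|x|} and |φ| ≤ 1). Let u : [0,∞) × ℝ → ℝ be such that u(t,·) ∈ L²(ℝ) for each t and sup_{t≥0} ‖u(t,·)‖_{L²(ℝ)} < ∞. Then the functional M_q(t) = (1/μ_c(t)) ∫_ℝ φ(x/λ_c(t)) e^{−|x|/λ_c(t)^q} u(t,x) dx satisfies sup_{t ≥ 3} |M_q(t)| < ∞. -/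
open MeasureTheory Real

/-- `λ_c(t) = t^c / log t`. -/
noncomputable def lam (c t : ℝ) : ℝ := t ^ c / Real.log t

/-- `μ_c(t) = t^{1-c} (log t)²`. -/
noncomputable def mu (c t : ℝ) : ℝ := t ^ (1 - c) * (Real.log t) ^ 2

/-- The weight `φ(x) = eˣ - 1` for `x ≤ 0` and `φ(x) = 1 - e^{-x}` for `x > 0`. -/
noncomputable def phi (x : ℝ) : ℝ :=
  if x ≤ 0 then Real.exp x - 1 else 1 - Real.exp (-x)

/-- The virial functional
`M_q(t) = (1/μ_c(t)) ∫ φ(x/λ_c(t)) e^{-|x|/λ_c(t)^q} u(t,x) dx`. -/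
noncomputable def Mq (c q : ℝ) (u : ℝ → ℝ → ℝ) (t : ℝ) : ℝ :=
  (1 / mu c t) * ∫ x : ℝ, phi (x / lam c t) * Real.exp (-|x| / (lam c t) ^ q) * u t x

lemma integrable_exp_neg_mul_abs' {k : ℝ} (hk : 0 < k) :
    Integrable (fun x : ℝ => Real.exp (-(k * |x|))) := by
  have hIoi : IntegrableOn (fun x : ℝ => Real.exp (-(k * |x|))) (Set.Ioi 0) := by
    refine (exp_neg_integrableOn_Ioi 0 hk).congr_fun (fun x hx => ?_) measurableSet_Ioi
    rw [abs_of_pos hx]; beta_reduce; rw [neg_mul]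
  have hIic : IntegrableOn (fun x : ℝ => Real.exp (-(k * |x|))) (Set.Iic 0) := by
    rw [← Measure.map_neg_eq_self (volume : Measure ℝ)]
    have m : MeasurableEmbedding fun x : ℝ => -x := (Homeomorph.neg ℝ).measurableEmbedding
    rw [m.integrableOn_map_iff]
    simp_rw [Function.comp_def, abs_neg, Set.neg_preimage, Set.neg_Iic, neg_zero]
    exact Iff.mpr integrableOn_Ici_iff_integrableOn_Ioi hIoi
  have h := hIic.union hIoi
  rwa [Set.Iic_union_Ioi, integrableOn_univ] at h

lemma integral_exp_neg_mul_abs' {k : ℝ} (hk : 0 < k) :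
    ∫ x : ℝ, Real.exp (-(k * |x|)) = 2 / k := by
  have h1 : ∫ x : ℝ, Real.exp (-(k * |x|)) = 2 * ∫ x in Set.Ioi (0:ℝ), Real.exp (-(k*x)) :=
    integral_comp_abs (f := fun y => Real.exp (-(k * y)))
  have h2 := integral_comp_mul_left_Ioi (fun y => Real.exp (-y)) 0 hk
  simp only [mul_zero] at h2
  rw [h1, h2, integral_exp_neg_Ioi, neg_zero, Real.exp_zero, smul_eq_mul]
  field_simp

lemma phi_abs_le' (y : ℝ) : |phi y| ≤ 1 := by
  unfold phi
  split_ifs with h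
  · have h1 := Real.exp_pos y
    have h2 : Real.exp y ≤ 1 := Real.exp_le_one_iff.mpr h
    rw [abs_le]; constructor <;> linarith
  · have h1 := Real.exp_pos (-y)
    have h2 : Real.exp (-y) ≤ 1 := Real.exp_le_one_iff.mpr (by linarith [not_le.mp h])
    rw [abs_le]; constructor <;> linarith

lemma phi_measurable : Measurable phi := by
  unfold phi
  exact Measurable.ite (measurableSet_le measurable_id measurable_const)
    (by fun_prop) (by fun_prop)

/-- If `u(t,·) ∈ L²(ℝ)` with a uniform-in-time bound, `q > 1` and
`0 < c ≤ 2/(2+q)`, then the functional `M_q` is bounded on `[3, ∞)`. -/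
theorem virial_functional_bounded (q c : ℝ) (hq : 1 < q) (hc : 0 < c)
    (hcq : c ≤ 2 / (2 + q)) (u : ℝ → ℝ → ℝ)
    (h_L2 : ∀ t : ℝ, 0 ≤ t → MemLp (u t) 2 volume)
    (h_bdd : ∃ C : ℝ, ∀ t : ℝ, 0 ≤ t → eLpNorm (u t) 2 volume ≤ ENNReal.ofReal C) :
    ∃ M : ℝ, ∀ t : ℝ, 3 ≤ t → |Mq c q u t| ≤ M := by
  obtain ⟨C0, hC0⟩ := h_bdd
  set C : ℝ := max C0 0 with hCdef
  have hCnn : 0 ≤ C := le_max_right _ _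
  have hC : ∀ t : ℝ, 0 ≤ t → eLpNorm (u t) 2 volume ≤ ENNReal.ofReal C := fun t ht =>
    (hC0 t ht).trans (ENNReal.ofReal_le_ofReal (le_max_left _ _))
  refine ⟨C, fun t ht => ?_⟩
  have ht0 : (0:ℝ) < t := by linarith
  have ht1 : (1:ℝ) < t := by linarith
  have hL : 1 < Real.log t := by
    have h3 : 1 < Real.log 3 := by
      rw [Real.lt_log_iff_exp_lt (by norm_num)]
      calc Real.exp 1 < 2.7182818286 := Real.exp_one_lt_d9
        _ < 3 := by norm_num
    have := Real.log_le_log (by norm_num : (0:ℝ) < 3) ht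
    linarith
  have hlam : 0 < lam c t := div_pos (Real.rpow_pos_of_pos ht0 c) (by linarith)
  have hmu : 0 < mu c t := mul_pos (Real.rpow_pos_of_pos ht0 _) (by nlinarith)
  set a : ℝ := lam c t ^ q with ha
  have ha0 : 0 < a := Real.rpow_pos_of_pos hlam q
  set w : ℝ → ℝ := fun x => phi (x / lam c t) * Real.exp (-|x| / a) with hwdef
  -- pointwise bound on w
  have hwb : ∀ x : ℝ, |w x| ≤ Real.exp (-(a⁻¹ * |x|)) := by
    intro x
    have he : Real.exp (-|x| / a) = Real.exp (-(a⁻¹ * |x|)) := by ring_nf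
    calc |w x| = |phi (x / lam c t)| * Real.exp (-|x| / a) := by
          rw [hwdef]; rw [abs_mul, abs_of_pos (Real.exp_pos _)]
      _ ≤ 1 * Real.exp (-|x| / a) :=
          mul_le_mul_of_nonneg_right (phi_abs_le' _) (Real.exp_pos _).le
      _ = Real.exp (-(a⁻¹ * |x|)) := by rw [one_mul, he]
  have hw_m : Measurable w := by
    apply Measurable.mul
    · exact phi_measurable.comp (measurable_id.div_const _)
    · exact ((measurable_id.abs.neg).div_const _).exp
  -- the squared weight is integrable, dominated by exp(-(2 a⁻¹ |x|))
  have hk2 : (0:ℝ) < 2 * a⁻¹ := by positivity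
  have hg2 : Integrable (fun x : ℝ => Real.exp (-(2 * a⁻¹ * |x|))) :=
    integrable_exp_neg_mul_abs' hk2
  have hsqle : ∀ x : ℝ, w x ^ 2 ≤ Real.exp (-(2 * a⁻¹ * |x|)) := by
    intro x
    have h1 : w x ^ 2 = |w x| ^ 2 := (sq_abs _).symm
    have h2 : |w x| ^ 2 ≤ Real.exp (-(a⁻¹ * |x|)) ^ 2 :=
      pow_le_pow_left₀ (abs_nonneg _) (hwb x) 2
    have h3 : Real.exp (-(a⁻¹ * |x|)) ^ 2 = Real.exp (-(2 * a⁻¹ * |x|)) := by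
      rw [sq, ← Real.exp_add]; congr 1; ring
    rw [h1, ← h3]; exact h2
  have hwsq : Integrable (fun x : ℝ => w x ^ 2) := by
    refine hg2.mono' (hw_m.pow_const 2).aestronglyMeasurable (ae_of_all _ fun x => ?_)
    rw [Real.norm_eq_abs, abs_of_nonneg (sq_nonneg _)]
    exact hsqle x
  have hw2 : MemLp w 2 volume :=
    (memLp_two_iff_integrable_sq hw_m.aestronglyMeasurable).mpr hwsq
  have hu2 : MemLp (u t) 2 volume := h_L2 t (by linarith)
  -- Hölder / Cauchy-Schwarz
  have h2eq : (ENNReal.ofReal (2:ℝ)) = 2 := by norm_num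
  have hpq : Real.HolderConjugate 2 2 := Real.HolderConjugate.two_two
  have hold := integral_mul_norm_le_Lp_mul_Lq (μ := volume) hpq
    (h2eq ▸ hw2) (h2eq ▸ hu2)
  -- bound the first factor
  have hrpow_sq : ∀ y : ℝ, 0 ≤ y → y ^ (2:ℝ) = y ^ (2:ℕ) := fun y hy => by
    rw [show (2:ℝ) = ((2:ℕ):ℝ) by norm_num, Real.rpow_natCast]
  have hXint : Integrable (fun x : ℝ => ‖w x‖ ^ (2:ℝ)) := by
    refine hwsq.congr (ae_of_all _ fun x => ?_)
    show w x ^ 2 = ‖w x‖ ^ (2:ℝ)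
    rw [Real.norm_eq_abs, hrpow_sq _ (abs_nonneg _), sq_abs]
  have hXle : ∫ x : ℝ, ‖w x‖ ^ (2:ℝ) ≤ a := by
    have hmono : ∫ x : ℝ, ‖w x‖ ^ (2:ℝ) ≤ ∫ x : ℝ, Real.exp (-(2 * a⁻¹ * |x|)) := by
      refine integral_mono hXint hg2 fun x => ?_
      show ‖w x‖ ^ (2:ℝ) ≤ Real.exp (-(2 * a⁻¹ * |x|))
      rw [Real.norm_eq_abs, hrpow_sq _ (abs_nonneg _), sq_abs]
      exact hsqle x
    have hval : ∫ x : ℝ, Real.exp (-(2 * a⁻¹ * |x|)) = a := by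
      rw [integral_exp_neg_mul_abs' hk2]
      field_simp
    linarith [hmono, hval.le, hval.ge]
  have hX12 : (∫ x : ℝ, ‖w x‖ ^ (2:ℝ)) ^ ((1:ℝ)/2) ≤ lam c t ^ (q/2) := by
    have h1 : (∫ x : ℝ, ‖w x‖ ^ (2:ℝ)) ^ ((1:ℝ)/2) ≤ a ^ ((1:ℝ)/2) :=
      Real.rpow_le_rpow (integral_nonneg fun x => Real.rpow_nonneg (norm_nonneg _) _)
        hXle (by norm_num)
    have h2 : a ^ ((1:ℝ)/2) = lam c t ^ (q/2) := by
      rw [ha, ← Real.rpow_mul hlam.le]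
      ring_nf
    rw [← h2]; exact h1
  -- bound the second factor
  have hY12 : (∫ x : ℝ, ‖u t x‖ ^ (2:ℝ)) ^ ((1:ℝ)/2) ≤ C := by
    have he := hu2.eLpNorm_eq_integral_rpow_norm two_ne_zero ENNReal.ofNat_ne_top
    have htr : ((2:ENNReal)).toReal = (2:ℝ) := by norm_num
    rw [htr] at he
    have hle := hC t (by linarith)
    rw [he] at hle
    have := (ENNReal.ofReal_le_ofReal_iff hCnn).mp hle
    rwa [show ((2:ℝ))⁻¹ = (1:ℝ)/2 by norm_num] at this
  -- assemble
  set I : ℝ := (∫ x : ℝ, w x * u t x) with hI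
  have hint_abs : |I| ≤ ∫ x : ℝ, ‖w x‖ * ‖u t x‖ := by
    calc |I| = ‖I‖ := (Real.norm_eq_abs _).symm
      _ ≤ ∫ x : ℝ, ‖w x * u t x‖ := norm_integral_le_integral_norm _
      _ = ∫ x : ℝ, ‖w x‖ * ‖u t x‖ := by simp only [norm_mul]
  have hkey : |I| ≤ lam c t ^ (q/2) * C := by
    calc |I| ≤ ∫ x : ℝ, ‖w x‖ * ‖u t x‖ := hint_abs
      _ ≤ (∫ x : ℝ, ‖w x‖ ^ (2:ℝ)) ^ ((1:ℝ)/2) * (∫ x : ℝ, ‖u t x‖ ^ (2:ℝ)) ^ ((1:ℝ)/2) := hold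
      _ ≤ lam c t ^ (q/2) * C := by
          apply mul_le_mul hX12 hY12
            (Real.rpow_nonneg (integral_nonneg fun x => Real.rpow_nonneg (norm_nonneg _) _) _)
            (Real.rpow_nonneg hlam.le _)
  -- the prefactor bound : lam^(q/2) ≤ mu
  have hpre : lam c t ^ (q/2) ≤ mu c t := by
    have h1 : lam c t ≤ t ^ c := by
      rw [lam]
      exact div_le_self (Real.rpow_pos_of_pos ht0 c).le (by linarith)
    have h2 : lam c t ^ (q/2) ≤ (t ^ c) ^ (q/2) :=
      Real.rpow_le_rpow hlam.le h1 (by positivity)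
    have h3 : (t ^ c) ^ (q/2) = t ^ (c * (q/2)) := (Real.rpow_mul ht0.le c (q/2)).symm
    have hcq2 : c * (2 + q) ≤ 2 := by
      rw [le_div_iff₀ (by linarith : (0:ℝ) < 2 + q)] at hcq
      linarith
    have h4 : t ^ (c * (q/2)) ≤ t ^ (1 - c) :=
      Real.rpow_le_rpow_of_exponent_le ht1.le (by nlinarith)
    have h5 : t ^ (1 - c) ≤ mu c t := by
      rw [mu]
      exact le_mul_of_one_le_right (Real.rpow_pos_of_pos ht0 _).le (by nlinarith)
    calc lam c t ^ (q/2) ≤ (t ^ c) ^ (q/2) := h2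
      _ = t ^ (c * (q/2)) := h3
      _ ≤ t ^ (1 - c) := h4
      _ ≤ mu c t := h5
  -- final
  have hMqeq : Mq c q u t = (1 / mu c t) * I := rfl
  rw [hMqeq, abs_mul, abs_of_pos (by positivity : (0:ℝ) < 1 / mu c t)]
  calc (1 / mu c t) * |I| ≤ (1 / mu c t) * (lam c t ^ (q/2) * C) :=
        mul_le_mul_of_nonneg_left hkey (by positivity)
    _ ≤ (1 / mu c t) * (mu c t * C) :=
        mul_le_mul_of_nonneg_left (mul_le_mul_of_nonneg_right hpre hCnn) (by positivity)
    _ = C := by field_simp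
end
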